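/- Let S be a finite semigroup with the property that every identity u ≈ v that holds in S satisfies c(u) = c(v) (this holds precisely when the variety generated by S contains the two-element semilattice). Let n ≥ |S| + 4 and let f : Sⁿ → S be an operation that depends on all of its variables such that for each 1 ≤ i < j ≤ n there is a word w_{ij} over X_n with f_{ij} = w_{ij}^S. Then c(w_{ij}) = X_n \ {x_i} for all 1 ≤ i < j ≤ n. -/

import Mathlib

/-! ### Words and word functions -/

/-- The word `w^{(i j)}`: replace every occurrence of the letter `i` by `j`. -/
def subst {X : Type*} [DecidableEq X] (w : List X) (i j : X) : List X :=
  w.map fun t => if t = i then j else t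

/-- The prefix `s(w)`: the longest prefix of `w` containing all but one of the
letters of `c(w)` (the empty word if `w` is empty). -/
def wordS {X : Type*} [DecidableEq X] (w : List X) : List X :=
  w.take (w.toFinset.sup fun x => w.idxOf x)

/-- The letter `σ(w)` (the last letter of `w` to occur from the left), as a word of
length at most one; `s(w) ++ σ(w)` is the shortest prefix of `w` with full content. -/
def wordSigma {X : Type*} [DecidableEq X] (w : List X) : List X :=
  (w.drop (w.toFinset.sup fun x => w.idxOf x)).take 1

/-- The suffix `e(w)`, dual to `s(w)`. -/
def wordE {X : Type*} [DecidableEq X] (w : List X) : List X :=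
  (wordS w.reverse).reverse

/-- The letter `ε(w)` (as a word of length at most one), dual to `σ(w)`. -/
def wordEps {X : Type*} [DecidableEq X] (w : List X) : List X :=
  (wordSigma w.reverse).reverse

/-- The initial part `i₂(w)`: retain only the first occurrence from the left of
each letter of `w`. -/
def initPart {X : Type*} [DecidableEq X] (w : List X) : List X :=
  w.reverse.dedup.reverse

/-- The dual `F̄` of a word function `F`: `F̄(w) = reverse (F (reverse w))`. -/
def dualW {X : Type*} (F : List X → List X) (w : List X) : List X :=
  (F w.reverse).reverse

theorem wordS_length_lt {X : Type*} [DecidableEq X] {w : List X} (hw : w ≠ []) :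
    (wordS w).length < w.length := by
  have hpos : 0 < w.length := List.length_pos_iff.mpr hw
  have hk : (w.toFinset.sup fun x => w.idxOf x) < w.length := by
    rw [Finset.sup_lt_iff hpos]
    intro x hx
    exact List.idxOf_lt_length_iff.mpr (List.mem_toFinset.mp hx)
  simp only [wordS, List.length_take]
  omega

/-- The common recursion defining the word functions `h_m` and `i_m` of Gerhard
and Petrich: `t_m(w) = t_m(s(w)) · σ(w) · t̄_{m-1}(w)` for `m ≥ 3`, where the base
function (`h₂` = first letter, `i₂` = initial part) is a parameter, and all
functions send the empty word to the empty word. -/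
def tW {X : Type*} [DecidableEq X] (base : List X → List X) : ℕ → List X → List X
  | m, w =>
    if hw : w = [] then []
    else if hm : m ≤ 2 then base w
    else tW base m (wordS w) ++ wordSigma w ++ (tW base (m - 1) w.reverse).reverse
termination_by m w => m + w.length
decreasing_by
  · have := wordS_length_lt hw; omega
  · first | omega | (simp at *; omega) | (simp at *)

/-- The word function `h_m` (`m ≥ 2`): `h₂(w)` is the first letter of `w`, and
`h_m(w) = h_m(s(w)) · σ(w) · h̄_{m-1}(w)` for `m ≥ 3`. -/
def hW {X : Type*} [DecidableEq X] : ℕ → List X → List X :=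
  tW fun w => w.take 1

/-- The word function `i_m` (`m ≥ 2`): `i₂(w)` is the initial part of `w`, and
`i_m(w) = i_m(s(w)) · σ(w) · ī_{m-1}(w)` for `m ≥ 3`. -/
def iW {X : Type*} [DecidableEq X] : ℕ → List X → List X :=
  tW initPart

/-! ### Operations induced by words -/

/-- Evaluation of a word `w` over the alphabet `X` in a semigroup `S` under the
assignment `a : X → S`, computed in the monoid `WithOne S` (so that the empty word
evaluates to `1` and a nonempty word to the coercion of its value in `S`). -/
def evalW {X S : Type*} [Semigroup S] (a : X → S) (w : List X) : WithOne S :=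
  (w.map fun t => (a t : WithOne S)).prod

/-- The identification minor `f_{i j}` of an `n`-ary operation: the `i`-th argument
is replaced by the `j`-th. -/
def minor {α β : Type*} {n : ℕ} (f : (Fin n → α) → β) (i j : Fin n) :
    (Fin n → α) → β :=
  fun a => f (Function.update a i (a j))

/-- `f` depends on its `i`-th variable. -/
def DependsOnVar {α β : Type*} {n : ℕ} (f : (Fin n → α) → β) (i : Fin n) : Prop :=
  ∃ a b : Fin n → α, (∀ k : Fin n, k ≠ i → a k = b k) ∧ f a ≠ f b

/-- `f : Sⁿ → S` is induced by a (nonempty) word over `X_n = {x_1, …, x_n}`. -/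
def InducedByWord {S : Type*} [Semigroup S] {n : ℕ} (f : (Fin n → S) → S) : Prop :=
  ∃ w : List (Fin n), w ≠ [] ∧ ∀ a : Fin n → S, (f a : WithOne S) = evalW a w

section Aux

lemma subst_ne_nil {X : Type*} [DecidableEq X] {w : List X} (h : w ≠ []) (i j : X) :
    subst w i j ≠ [] := by
  simp [subst, h]

lemma mem_subst_of_mem {X : Type*} [DecidableEq X] {w : List X} {m i : X} (j : X)
    (hmi : m ≠ i) (hm : m ∈ w) : m ∈ subst w i j :=
  List.mem_map.mpr ⟨m, hm, if_neg hmi⟩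

lemma mem_of_mem_subst {X : Type*} [DecidableEq X] {w : List X} {m i j : X}
    (hmj : m ≠ j) (hm : m ∈ subst w i j) : m ∈ w := by
  obtain ⟨t, ht, hte⟩ := List.mem_map.mp hm
  by_cases h : t = i
  · rw [if_pos h] at hte; exact absurd hte.symm hmj
  · rw [if_neg h] at hte; subst hte; exact ht

lemma not_mem_subst {X : Type*} [DecidableEq X] {w : List X} {i j : X} (hij : i ≠ j) :
    i ∉ subst w i j := by
  intro hm
  obtain ⟨t, ht, hte⟩ := List.mem_map.mp hm
  by_cases h : t = i
  · rw [if_pos h] at hte; exact hij hte.symm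
  · rw [if_neg h] at hte; exact h hte

lemma evalW_subst {S : Type*} [Semigroup S] {n : ℕ} (a : Fin n → S) (w : List (Fin n))
    (i j : Fin n) :
    evalW a (subst w i j) = evalW (Function.update a i (a j)) w := by
  unfold evalW subst
  rw [List.map_map]
  refine congrArg List.prod (List.map_congr_left fun t _ => ?_)
  by_cases h : t = i <;> simp [h, Function.update_apply]

lemma evalW_congr {S : Type*} [Semigroup S] {n : ℕ} {a b : Fin n → S} {w : List (Fin n)}
    (h : ∀ t ∈ w, a t = b t) :
    evalW a w = evalW b w := by
  unfold evalW
  congr 1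
  exact List.map_congr_left fun t ht => by rw [h t ht]

end Aux

/-- Let `S` be a finite semigroup in which every valid identity
`u ≈ v` satisfies `c(u) = c(v)`. If `n ≥ |S| + 4` and `f : Sⁿ → S` depends on all
of its variables and all of its identification minors are induced by words
`w_{ij}`, then `c(w_{ij}) = X_n \ {x_i}` for all `i < j`. -/
theorem essential_scheme_content
    {S : Type*} [Semigroup S] [Fintype S]
    (hsat : ∀ (k : ℕ) (u v : List (Fin k)), u ≠ [] → v ≠ [] →
      (∀ a : Fin k → S, evalW a u = evalW a v) → u.toFinset = v.toFinset)
    (n : ℕ) (hn : Fintype.card S + 4 ≤ n)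
    (f : (Fin n → S) → S)
    (hdep : ∀ i : Fin n, DependsOnVar f i)
    (w : Fin n → Fin n → List (Fin n))
    (hw : ∀ i j : Fin n, i < j → (w i j) ≠ [] ∧
      ∀ a : Fin n → S, ((minor f i j a : S) : WithOne S) = evalW a (w i j)) :
    ∀ i j : Fin n, i < j → (w i j).toFinset = Finset.univ \ {i} := by
  -- `i` never occurs in `w i j`
  have key2 : ∀ i j : Fin n, i < j → i ∉ (w i j).toFinset := by
    intro i j hij
    obtain ⟨hne, he⟩ := hw i j hij
    have hid : ∀ a : Fin n → S, evalW a (w i j) = evalW a (subst (w i j) i j) := by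
      intro a
      rw [evalW_subst, ← he a, ← he (Function.update a i (a j))]
      unfold minor
      rw [Function.update_of_ne hij.ne', Function.update_idem]
    have hc := hsat n _ _ hne (subst_ne_nil hne i j) hid
    intro hmem
    exact not_mem_subst hij.ne (List.mem_toFinset.mp (hc ▸ hmem))
  -- identification minors commute: valid identity between substituted words
  have key1 : ∀ i j p q : Fin n, i < j → p < q → i ≠ p → i ≠ q → j ≠ p → j ≠ q →
      (subst (w i j) p q).toFinset = (subst (w p q) i j).toFinset := by
    intro i j p q hij hpq hip hiq hjp hjq
    obtain ⟨hne1, he1⟩ := hw i j hij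
    obtain ⟨hne2, he2⟩ := hw p q hpq
    apply hsat n _ _ (subst_ne_nil hne1 p q) (subst_ne_nil hne2 i j)
    intro a
    rw [evalW_subst, evalW_subst, ← he1 (Function.update a p (a q)),
      ← he2 (Function.update a i (a j))]
    unfold minor
    rw [Function.update_of_ne hjp, Function.update_of_ne (Ne.symm hiq)]
    rw [Function.update_comm (Ne.symm hip)]
  -- dependence on a variable forces it to occur in some word
  have key3 : ∀ (k : Fin n) (T : Finset (Fin n)), T.card ≤ 3 → k ∈ T →
      ∃ p q : Fin n, p < q ∧ p ∉ T ∧ q ∉ T ∧ k ∈ (w p q).toFinset := by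
    intro k T hT hkT
    obtain ⟨a, b, hab, hfab⟩ := hdep k
    have hcard : (Finset.univ : Finset S).card < Tᶜ.card := by
      rw [Finset.card_compl]
      simp only [Finset.card_univ, Fintype.card_fin]
      omega
    obtain ⟨x, hx, y, hy, hxy, haxy⟩ :=
      Finset.exists_ne_map_eq_of_card_lt_of_maps_to hcard
        (fun t _ => Finset.mem_univ (a t))
    have main : ∀ p q : Fin n, p < q → p ∈ Tᶜ → q ∈ Tᶜ → a p = a q →
        p ∉ T ∧ q ∉ T ∧ k ∈ (w p q).toFinset := by
      intro p q hpq hp hq hapq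
      rw [Finset.mem_compl] at hp hq
      refine ⟨hp, hq, ?_⟩
      obtain ⟨hne, he⟩ := hw p q hpq
      by_contra hk
      have hbk : ∀ t ∈ w p q, a t = b t := fun t ht =>
        hab t (fun h => hk (h ▸ List.mem_toFinset.mpr ht))
      have hap : Function.update a p (a q) = a := by
        rw [← hapq]; exact Function.update_eq_self p a
      have hbpq : b p = b q := by
        rw [← hab p (fun h => hp (h ▸ hkT)), ← hab q (fun h => hq (h ▸ hkT)), hapq]
      have hbp : Function.update b p (b q) = b := by
        rw [← hbpq]; exact Function.update_eq_self p b
      have h1 : (f a : WithOne S) = evalW a (w p q) := by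
        have h := he a; unfold minor at h; rw [hap] at h; exact h
      have h2 : (f b : WithOne S) = evalW b (w p q) := by
        have h := he b; unfold minor at h; rw [hbp] at h; exact h
      apply hfab
      apply WithOne.coe_inj.mp
      rw [h1, h2]
      exact evalW_congr hbk
    rcases lt_or_gt_of_ne hxy with h | h
    · obtain ⟨h1, h2, h3⟩ := main x y h hx hy haxy
      exact ⟨x, y, h, h1, h2, h3⟩
    · obtain ⟨h1, h2, h3⟩ := main y x h hy hx haxy.symm
      exact ⟨y, x, h, h1, h2, h3⟩
  intro i j hij
  ext k
  simp only [Finset.mem_sdiff, Finset.mem_univ, Finset.mem_singleton, true_and]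
  constructor
  · intro hk hki
    exact key2 i j hij (hki ▸ hk)
  · intro hki
    by_cases hkj : k = j
    · subst hkj
      have hcard : ({i, k} : Finset (Fin n)).card ≤ 3 := by
        have h1 := Finset.card_insert_le i ({k} : Finset (Fin n))
        simp at h1; omega
      obtain ⟨p, q, hpq, hp, hq, hkw⟩ := key3 k {i, k} hcard (by simp)
      simp only [Finset.mem_insert, Finset.mem_singleton, not_or] at hp hq
      have h1 := key1 i k p q hij hpq (fun h => hp.1 h.symm) (fun h => hq.1 h.symm)
        (fun h => hp.2 h.symm) (fun h => hq.2 h.symm)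
      have h2 : k ∈ (subst (w p q) i k).toFinset :=
        List.mem_toFinset.mpr (mem_subst_of_mem k hki (List.mem_toFinset.mp hkw))
      rw [← h1] at h2
      exact List.mem_toFinset.mpr (mem_of_mem_subst (Ne.symm hq.2)
        (List.mem_toFinset.mp h2))
    · have hcard : ({i, j, k} : Finset (Fin n)).card ≤ 3 := by
        have h1 := Finset.card_insert_le i ({j, k} : Finset (Fin n))
        have h2 := Finset.card_insert_le j ({k} : Finset (Fin n))
        simp at h1 h2; omega
      obtain ⟨p, q, hpq, hp, hq, hkw⟩ := key3 k {i, j, k} hcard (by simp)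
      simp only [Finset.mem_insert, Finset.mem_singleton, not_or] at hp hq
      have h1 := key1 i j p q hij hpq (fun h => hp.1 h.symm) (fun h => hq.1 h.symm)
        (fun h => hp.2.1 h.symm) (fun h => hq.2.1 h.symm)
      have h2 : k ∈ (subst (w p q) i j).toFinset :=
        List.mem_toFinset.mpr (mem_subst_of_mem j hki (List.mem_toFinset.mp hkw))
      rw [← h1] at h2
      exact List.mem_toFinset.mpr (mem_of_mem_subst (Ne.symm hq.2.2)
        (List.mem_toFinset.mp h2))
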